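/- Let f : V → V' be a continuous K-linear map of separable Banach spaces over a nonarchimedean field K with finite-dimensional kernel and finite-dimensional cokernel. Then there exists a continuous K-linear map g : V' → V such that both f ∘ g − id_{V'} and g ∘ f − id_V have finite rank. -/

import Mathlib

open Filter Topology

section AuxLemmas
variable {K : Type*} [NontriviallyNormedField K]

section CauchyTrick
variable {X Y : Type*} [NormedAddCommGroup X] [NormedSpace K X]
  [NormedAddCommGroup Y] [NormedSpace K Y]

/-- Cauchy trick: the closure of a line through a point of the range of a continuous
linear map from a complete space is contained in the range. -/
lemma closure_span_image_subset_range [CompleteSpace X] (u : X →L[K] Y) (x₀ : X) :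
    closure (Submodule.span K {u x₀} : Set Y) ⊆ Set.range u := by
  by_cases hd : u x₀ = 0
  · rw [hd, Submodule.span_zero_singleton]
    simp only [Submodule.bot_coe, closure_singleton]
    rintro α rfl
    exact ⟨0, map_zero u⟩
  intro α hα
  rcases mem_closure_iff_seq_limit.1 hα with ⟨y, hy, hlim⟩
  choose c hc using fun n => Submodule.mem_span_singleton.1 (hy n)
  have hux : 0 < ‖u x₀‖ := norm_pos_iff.2 hd
  have hCy : CauchySeq y := hlim.cauchySeq
  have key : ∀ n m, dist (c n • x₀) (c m • x₀) = (‖x₀‖ / ‖u x₀‖) * dist (y n) (y m) := by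
    intro n m
    rw [dist_eq_norm, dist_eq_norm, ← hc n, ← hc m, ← sub_smul, ← sub_smul, norm_smul, norm_smul]
    field_simp
  have hCx : CauchySeq fun n => c n • x₀ := by
    rw [Metric.cauchySeq_iff] at hCy ⊢
    intro ε hε
    by_cases hx0 : ‖x₀‖ = 0
    · refine ⟨0, fun n _ m _ => ?_⟩
      rw [key]
      simp [hx0, hε]
    have hx0' : 0 < ‖x₀‖ / ‖u x₀‖ := div_pos (lt_of_le_of_ne (norm_nonneg _) (Ne.symm hx0)) hux
    rcases hCy (ε / (‖x₀‖ / ‖u x₀‖)) (div_pos hε hx0') with ⟨N, hN⟩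
    refine ⟨N, fun n hn m hm => ?_⟩
    rw [key]
    calc ‖x₀‖ / ‖u x₀‖ * dist (y n) (y m) < ‖x₀‖ / ‖u x₀‖ * (ε / (‖x₀‖ / ‖u x₀‖)) := by
          exact mul_lt_mul_of_pos_left (hN n hn m hm) hx0'
      _ = ε := by field_simp
  rcases cauchySeq_tendsto_of_complete hCx with ⟨xs, hxs⟩
  refine ⟨xs, ?_⟩
  have h1 : Tendsto (fun n => u (c n • x₀)) atTop (𝓝 (u xs)) :=
    (u.continuous.tendsto _).comp hxs
  have h2 : (fun n => u (c n • x₀)) = y := funext fun n => by rw [map_smul, hc n]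
  rw [h2] at h1
  exact tendsto_nhds_unique h1 hlim

/-- Dense line lemma: any nonzero element of the closure of a line generates
a line with the same closure (at least as large). -/
lemma closure_span_singleton_subset {y₀ d₀ : Y}
    (hd₀ : d₀ ∈ closure (Submodule.span K {y₀} : Set Y)) (hne : d₀ ≠ 0) :
    closure (Submodule.span K {y₀} : Set Y) ⊆ closure (Submodule.span K {d₀} : Set Y) := by
  have hy₀ : y₀ ≠ 0 := by
    rintro rfl
    rw [Submodule.span_zero_singleton] at hd₀
    simp only [Submodule.bot_coe, closure_singleton, Set.mem_singleton_iff] at hd₀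
    exact hne hd₀
  -- enough to show y₀ is in the closure of the span of d₀
  suffices hy : y₀ ∈ (Submodule.span K {d₀}).topologicalClosure by
    have h1 : Submodule.span K {y₀} ≤ (Submodule.span K {d₀}).topologicalClosure := by
      rw [Submodule.span_le, Set.singleton_subset_iff]; exact hy
    have h2 : closure (Submodule.span K {y₀} : Set Y) ⊆
        ((Submodule.span K {d₀}).topologicalClosure : Set Y) :=
      closure_minimal h1 (Submodule.isClosed_topologicalClosure _)
    exact h2
  rcases mem_closure_iff_seq_limit.1 hd₀ with ⟨y, hy, hlim⟩
  choose c hc using fun n => Submodule.mem_span_singleton.1 (hy n)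
  have hy₀' : 0 < ‖y₀‖ := norm_pos_iff.2 hy₀
  have hd₀' : 0 < ‖d₀‖ := norm_pos_iff.2 hne
  -- ‖c n‖ tends to ‖d₀‖/‖y₀‖ > 0
  have hnc : Tendsto (fun n => ‖c n‖) atTop (𝓝 (‖d₀‖ / ‖y₀‖)) := by
    have h1 : Tendsto (fun n => ‖y n‖) atTop (𝓝 ‖d₀‖) := hlim.norm
    have h2 : (fun n => ‖c n‖) = fun n => ‖y n‖ / ‖y₀‖ := by
      funext n; rw [← hc n, norm_smul]; field_simp
    rw [h2]
    exact h1.div_const _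
  have hev : ∀ᶠ n in atTop, ‖d₀‖ / ‖y₀‖ / 2 < ‖c n‖ :=
    hnc.eventually (eventually_gt_nhds (by have := div_pos hd₀' hy₀'; linarith))
  -- (c n)⁻¹ • d₀ → y₀
  have hconv : Tendsto (fun n => (c n)⁻¹ • d₀) atTop (𝓝 y₀) := by
    rw [tendsto_iff_dist_tendsto_zero]
    apply squeeze_zero' (Eventually.of_forall fun n => dist_nonneg)
      (g := fun n => (2 * ‖y₀‖ / ‖d₀‖) * ‖y n - d₀‖)
    · filter_upwards [hev] with n hn
      have h2y : (0:ℝ) < 2 * ‖y₀‖ := by linarith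
      have hcn : c n ≠ 0 := by
        intro h; rw [h, norm_zero] at hn
        have : 0 < ‖d₀‖ / ‖y₀‖ / 2 := by positivity
        linarith
      have heq : (c n)⁻¹ • d₀ - y₀ = (c n)⁻¹ • (d₀ - y n) := by
        rw [smul_sub, ← hc n, smul_smul, inv_mul_cancel₀ hcn, one_smul]
      rw [dist_eq_norm, heq, norm_smul, norm_inv, norm_sub_rev]
      apply mul_le_mul_of_nonneg_right _ (norm_nonneg _)
      rw [inv_le_comm₀ (norm_pos_iff.2 hcn) (by positivity)]
      calc (2 * ‖y₀‖ / ‖d₀‖)⁻¹ = ‖d₀‖ / ‖y₀‖ / 2 := by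
            rw [inv_div]; ring
        _ ≤ ‖c n‖ := le_of_lt hn
    · have h0 : Tendsto (fun n => y n - d₀) atTop (𝓝 0) := by
        simpa using hlim.sub (tendsto_const_nhds (x := d₀))
      simpa using (h0.norm).const_mul (2 * ‖y₀‖ / ‖d₀‖)
  refine mem_closure_of_tendsto hconv (Eventually.of_forall fun n => ?_)
  exact Submodule.smul_mem _ _ (Submodule.mem_span_singleton_self _)

end CauchyTrick

universe uX uY

section RangeClosed
variable {Y : Type uY} [NormedAddCommGroup Y] [NormedSpace K Y] [CompleteSpace Y]

lemma isClosed_range_aux (n : ℕ) :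
    ∀ (X : Type (max uX uY)) [NormedAddCommGroup X] [NormedSpace K X] [CompleteSpace X],
    ∀ (u : X →L[K] Y),
    FiniteDimensional K (Y ⧸ LinearMap.range (u : X →ₗ[K] Y)) →
    Module.finrank K (Y ⧸ LinearMap.range (u : X →ₗ[K] Y)) ≤ n →
    IsClosed ((LinearMap.range (u : X →ₗ[K] Y) : Submodule K Y) : Set Y) := by
  induction n with
  | zero =>
    intro X _ _ _ u hfd hn
    have hsub : Subsingleton (Y ⧸ LinearMap.range (u : X →ₗ[K] Y)) := by
      haveI := hfd
      rw [← Module.finrank_zero_iff (R := K)]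
      omega
    have htop : LinearMap.range (u : X →ₗ[K] Y) = ⊤ :=
      (Submodule.Quotient.subsingleton_iff).1 hsub
    rw [htop]
    simpa using isClosed_univ
  | succ n ih =>
    intro X _ _ _ u hfd hn
    by_cases hcl : IsClosed ((LinearMap.range (u : X →ₗ[K] Y) : Submodule K Y) : Set Y)
    · exact hcl
    -- pick y₀ in the closure of the range but not in the range
    have hex : ∃ y₀, y₀ ∈ closure ((LinearMap.range (u : X →ₗ[K] Y) : Submodule K Y) : Set Y) ∧
        y₀ ∉ (LinearMap.range (u : X →ₗ[K] Y) : Submodule K Y) := by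
      by_contra h
      push_neg at h
      have : closure ((LinearMap.range (u : X →ₗ[K] Y) : Submodule K Y) : Set Y) ⊆
          ((LinearMap.range (u : X →ₗ[K] Y) : Submodule K Y) : Set Y) := fun z hz => h z hz
      exact hcl (closure_subset_iff_isClosed.1 this)
    obtain ⟨y₀, hy₀cl, hy₀notin⟩ := hex
    set L : Submodule K Y := (Submodule.span K {y₀}).topologicalClosure with hLdef
    have hLclosed : IsClosed (L : Set Y) := Submodule.isClosed_topologicalClosure _
    haveI : CompleteSpace ↥L := hLclosed.completeSpace_coe
    set u' : X × ↥L →L[K] Y := u.coprod L.subtypeL with hu'def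
    have hy₀L : y₀ ∈ L := Submodule.le_topologicalClosure _ (Submodule.mem_span_singleton_self y₀)
    have hrange' : LinearMap.range (u' : X × ↥L →ₗ[K] Y)
        = LinearMap.range (u : X →ₗ[K] Y) ⊔ L := by
      rw [hu'def]
      rw [ContinuousLinearMap.coe_coprod, LinearMap.range_coprod]
      congr 1
      simpa using Submodule.range_subtype L
    set R := LinearMap.range (u : X →ₗ[K] Y) with hRdef
    set R' := LinearMap.range (u' : X × ↥L →ₗ[K] Y) with hR'def
    have hRR' : R ≤ R' := by rw [hrange']; exact le_sup_left
    have hy₀R' : y₀ ∈ R' := by rw [hrange']; exact Submodule.mem_sup_right hy₀L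
    -- the new cokernel is finite-dimensional of smaller rank
    let q : (Y ⧸ R) →ₗ[K] Y ⧸ R' := Submodule.mapQ R R' LinearMap.id (by simpa using hRR')
    have hq : ∀ z : Y, q (Submodule.Quotient.mk z) = Submodule.Quotient.mk z := fun z => by
      simp [q, Submodule.mapQ_apply]
    have hqsurj : Function.Surjective q := by
      intro z
      obtain ⟨w, rfl⟩ := Submodule.Quotient.mk_surjective R' z
      exact ⟨Submodule.Quotient.mk w, hq w⟩
    haveI hfdR : FiniteDimensional K (Y ⧸ R) := hfd
    haveI hfd' : FiniteDimensional K (Y ⧸ R') := Module.Finite.of_surjective q hqsurj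
    have hkernontriv : Nontrivial ↥(LinearMap.ker q) := by
      refine Submodule.nontrivial_iff_ne_bot.2 ?_
      intro hbot
      have hmem : Submodule.Quotient.mk y₀ ∈ LinearMap.ker q := by
        rw [LinearMap.mem_ker, hq]
        exact (Submodule.Quotient.mk_eq_zero R').2 hy₀R'
      rw [hbot, Submodule.mem_bot] at hmem
      exact hy₀notin ((Submodule.Quotient.mk_eq_zero R).1 hmem)
    have hrank : Module.finrank K (Y ⧸ R') ≤ n := by
      have h1 := LinearMap.finrank_range_add_finrank_ker q
      have h2 : Module.finrank K ↥(LinearMap.range q) = Module.finrank K (Y ⧸ R') := by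
        rw [LinearMap.range_eq_top.2 hqsurj]
        exact finrank_top _ _
      have h3 : 0 < Module.finrank K ↥(LinearMap.ker q) := by
        rw [Module.finrank_pos_iff]
        exact hkernontriv
      rw [h2] at h1
      omega
    have hR'cl : IsClosed ((R' : Submodule K Y) : Set Y) := ih (X × ↥L) u' hfd' hrank
    -- the intersection of the range with L is trivial
    have hD : ∀ d, d ∈ R → d ∈ L → d = 0 := by
      intro d hdR hdL
      by_contra hne
      have hdL' : d ∈ closure ((Submodule.span K {y₀} : Submodule K Y) : Set Y) := by
        rw [← Submodule.topologicalClosure_coe]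
        exact hdL
      have h1 : (L : Set Y) ⊆ closure ((Submodule.span K {d} : Submodule K Y) : Set Y) := by
        rw [hLdef, Submodule.topologicalClosure_coe]
        exact closure_span_singleton_subset hdL' hne
      obtain ⟨x₀, hx₀⟩ := hdR
      have h2 : closure ((Submodule.span K {d} : Submodule K Y) : Set Y) ⊆ Set.range u := by
        have := closure_span_image_subset_range u x₀
        rwa [show u x₀ = d from hx₀] at this
      have h3 : y₀ ∈ Set.range u := h2 (h1 hy₀L)
      apply hy₀notin
      obtain ⟨x, hx⟩ := h3
      exact ⟨x, hx⟩
    -- now prove the range is closed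
    apply isClosed_of_closure_subset
    intro y hy
    have hyR' : y ∈ R' := by
      have hsub : closure ((R : Submodule K Y) : Set Y) ⊆ ((R' : Submodule K Y) : Set Y) :=
        closure_minimal (fun z hz => hRR' hz) hR'cl
      exact hsub hy
    haveI : CompleteSpace ↥R' := hR'cl.completeSpace_coe
    set v : X × ↥L →L[K] ↥R' := u'.codRestrict R' (fun x => LinearMap.mem_range_self _ x)
      with hvdef
    have hvsurj : Function.Surjective v := by
      rintro ⟨z, hz⟩
      obtain ⟨x, hx⟩ := hz
      exact ⟨x, Subtype.ext hx⟩
    obtain ⟨C, hCpos, hC⟩ := ContinuousLinearMap.exists_preimage_norm_le v hvsurj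
    obtain ⟨r, hrR, hrlim⟩ := mem_closure_iff_seq_limit.1 hy
    have hyr : ∀ n : ℕ, y - r n ∈ R' := fun n => R'.sub_mem hyR' (hRR' (hrR n))
    choose p hp hpnorm using fun n => hC ⟨y - r n, hyr n⟩
    have hdec : ∀ n, u (p n).1 + ((p n).2 : Y) = y - r n := by
      intro n
      have h1 := congrArg Subtype.val (hp n)
      rwa [hvdef, ContinuousLinearMap.coe_codRestrict_apply,
        ContinuousLinearMap.coprod_apply] at h1
    have hll : ∀ n m : ℕ, ((p n).2 : Y) = ((p m).2 : Y) := by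
      intro n m
      have h1 : ((p n).2 : Y) - ((p m).2 : Y) ∈ L := L.sub_mem (p n).2.2 (p m).2.2
      have h2 : ((p n).2 : Y) - ((p m).2 : Y) ∈ R := by
        have heq : ((p n).2 : Y) - ((p m).2 : Y)
            = (r m + u (p m).1) - (r n + u (p n).1) := by
          have e1 := hdec n
          have e2 := hdec m
          have : ((p n).2 : Y) = y - r n - u (p n).1 := by
            rw [← e1]; abel
          have h2' : ((p m).2 : Y) = y - r m - u (p m).1 := by
            rw [← e2]; abel
          rw [this, h2']; abel
        rw [heq]
        exact R.sub_mem (R.add_mem (hrR m) (LinearMap.mem_range_self _ (p m).1))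
          (R.add_mem (hrR n) (LinearMap.mem_range_self _ (p n).1))
      have := hD _ h2 h1
      exact sub_eq_zero.1 this
    have hl0 : ((p 0).2 : Y) = 0 := by
      have hbound : ∀ n, ‖((p 0).2 : Y)‖ ≤ C * ‖y - r n‖ := by
        intro n
        rw [hll 0 n]
        calc ‖((p n).2 : Y)‖ = ‖(p n).2‖ := rfl
          _ ≤ ‖p n‖ := norm_snd_le (p n)
          _ ≤ C * ‖(⟨y - r n, hyr n⟩ : ↥R')‖ := hpnorm n
          _ = C * ‖y - r n‖ := rfl
      have htend : Tendsto (fun n => C * ‖y - r n‖) atTop (𝓝 0) := by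
        have h0 : Tendsto (fun n => y - r n) atTop (𝓝 0) := by
          simpa using (tendsto_const_nhds (x := y)).sub hrlim
        simpa using (h0.norm).const_mul C
      have hle : ‖((p 0).2 : Y)‖ ≤ 0 :=
        ge_of_tendsto htend (Eventually.of_forall hbound)
      simpa using norm_le_zero_iff.1 hle
    have hfin : y = r 0 + u (p 0).1 := by
      have := hdec 0
      rw [hl0, add_zero] at this
      rw [this]; abel
    rw [hfin]
    exact R.add_mem (hrR 0) (LinearMap.mem_range_self _ (p 0).1)

lemma isClosed_range_of_fd_coker {X : Type*} [NormedAddCommGroup X]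
    [NormedSpace K X] [CompleteSpace X] (u : X →L[K] Y)
    (hfd : FiniteDimensional K (Y ⧸ LinearMap.range (u : X →ₗ[K] Y))) :
    IsClosed ((LinearMap.range (u : X →ₗ[K] Y) : Submodule K Y) : Set Y) := by
  have hbotc : IsClosed (((⊥ : Submodule K Y) : Submodule K Y) : Set Y) := by
    rw [Submodule.bot_coe]
    exact isClosed_singleton
  haveI : CompleteSpace ↥(⊥ : Submodule K Y) := hbotc.completeSpace_coe
  set u0 : X × ↥(⊥ : Submodule K Y) →L[K] Y := u.coprod (⊥ : Submodule K Y).subtypeL with hu0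
  have hr : LinearMap.range (u0 : X × ↥(⊥ : Submodule K Y) →ₗ[K] Y)
      = LinearMap.range (u : X →ₗ[K] Y) := by
    rw [hu0, ContinuousLinearMap.coe_coprod, LinearMap.range_coprod]
    have hb : LinearMap.range ((⊥ : Submodule K Y).subtypeL
        : ↥(⊥ : Submodule K Y) →ₗ[K] Y) = ⊥ := by
      simpa using Submodule.range_subtype (⊥ : Submodule K Y)
    rw [hb, sup_bot_eq]
  have hfd0 : FiniteDimensional K
      (Y ⧸ LinearMap.range (u0 : X × ↥(⊥ : Submodule K Y) →ₗ[K] Y)) := by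
    rw [hr]; exact hfd
  have hres := isClosed_range_aux (K := K) (Y := Y)
    (Module.finrank K (Y ⧸ LinearMap.range (u0 : X × ↥(⊥ : Submodule K Y) →ₗ[K] Y)))
    (X × ↥(⊥ : Submodule K Y)) u0 hfd0 le_rfl
  rwa [hr] at hres

end RangeClosed

section ToolT
variable {V : Type*} [NormedAddCommGroup V] [NormedSpace K V] [IsUltrametricDist V]

/-- Invariant for partial projections onto `N`. -/
def GoodExt (N : Submodule K V) (B : ℝ) (φ : V →ₗ.[K] ↥N) : Prop :=
  N ≤ φ.domain ∧ (∀ z : φ.domain, ‖φ z‖ ≤ B * ‖(z : V)‖) ∧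
    ∀ (v : V) (hv : v ∈ N) (h : v ∈ φ.domain), ((φ ⟨v, h⟩ : ↥N) : V) = v

lemma step_alg {N : Submodule K V} {B B' : ℝ} (hB : 1 ≤ B) (hBB' : B < B')
    (φ : V →ₗ.[K] ↥N) (hgood : GoodExt N B φ) (hclosed : IsClosed (φ.domain : Set V))
    (x : V) :
    ∃ ψ, GoodExt N B' ψ ∧ φ ≤ ψ ∧ x ∈ ψ.domain := by
  obtain ⟨hNle, hbound, hproj⟩ := hgood
  have hB0 : (0:ℝ) < B := lt_of_lt_of_le one_pos hB
  by_cases hx : x ∈ φ.domain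
  · refine ⟨φ, ⟨hNle, fun z => (hbound z).trans ?_, hproj⟩, le_refl φ, hx⟩
    exact mul_le_mul_of_nonneg_right hBB'.le (norm_nonneg _)
  · have hne : (φ.domain : Set V).Nonempty := ⟨0, Submodule.zero_mem _⟩
    set d := Metric.infDist x (φ.domain : Set V) with hd_def
    have hd : 0 < d := (hclosed.notMem_iff_infDist_pos hne).1 hx
    have hratio : 1 < B' / B := (one_lt_div hB0).2 hBB'
    have hlt : d < B' / B * d := by nlinarith
    obtain ⟨u₀, hu₀mem, hu₀⟩ := (Metric.infDist_lt_iff hne).1 hlt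
    set y : ↥N := φ ⟨u₀, hu₀mem⟩ with hy_def
    set ψ := φ.supSpanSingleton x y hx with hψ_def
    have hdom : ψ.domain = φ.domain ⊔ Submodule.span K {x} :=
      LinearPMap.domain_supSpanSingleton φ x y hx
    have hle : φ ≤ ψ := by
      refine ⟨by rw [hdom]; exact le_sup_left, ?_⟩
      rintro ⟨a, ha⟩ ⟨b, hb⟩ hab
      simp only [] at hab
      subst hab
      have hmem : a + (0:K) • x ∈ ψ.domain := by simpa using hb
      have h1 : ψ ⟨a, hb⟩ = ψ ⟨a + (0:K) • x, hmem⟩ := by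
        congr 1
        exact Subtype.ext (by simp)
      have h2 := LinearPMap.supSpanSingleton_apply_mk φ x y hx a ha 0
      rw [h1, show ψ ⟨a + (0:K) • x, hmem⟩ = φ ⟨a, ha⟩ + (0:K) • y from h2]
      simp
    -- key norm bound
    have key : ∀ (u : V) (hu : u ∈ φ.domain) (c : K),
        ‖φ ⟨u, hu⟩ + c • y‖ ≤ B' * ‖u + c • x‖ := by
      intro u hu c
      have hval : φ ⟨u, hu⟩ + c • y = φ (⟨u, hu⟩ + c • ⟨u₀, hu₀mem⟩) := by
        rw [LinearPMap.map_add, LinearPMap.map_smul]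
      have h1 : ‖φ (⟨u, hu⟩ + c • ⟨u₀, hu₀mem⟩)‖ ≤ B * ‖u + c • u₀‖ := by
        have := hbound (⟨u, hu⟩ + c • ⟨u₀, hu₀mem⟩)
        simpa using this
      have h2 : u + c • u₀ = (u + c • x) + (c • u₀ - c • x) := by abel
      have h3 : ‖u + c • u₀‖ ≤ max ‖u + c • x‖ ‖c • u₀ - c • x‖ := by
        rw [h2]; exact IsUltrametricDist.norm_add_le_max _ _
      have h4 : ‖c • u₀ - c • x‖ = ‖c‖ * ‖x - u₀‖ := by
        rw [← smul_sub, norm_smul, norm_sub_rev]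
      have h5 : ‖c‖ * d ≤ ‖u + c • x‖ := by
        rcases eq_or_ne c 0 with rfl | hc
        · simpa using norm_nonneg (u + (0:K) • x)
        · have hrw : u + c • x = c • (x - -(c⁻¹ • u)) := by
            rw [smul_sub, smul_neg, smul_smul, mul_inv_cancel₀ hc, one_smul]
            abel
          have hmem' : -(c⁻¹ • u) ∈ φ.domain :=
            Submodule.neg_mem _ (Submodule.smul_mem _ _ hu)
          have hdist : d ≤ ‖x - -(c⁻¹ • u)‖ := by
            have := Metric.infDist_le_dist_of_mem (x := x) hmem'
            rwa [dist_eq_norm] at this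
          rw [hrw, norm_smul]
          exact mul_le_mul_of_nonneg_left hdist (norm_nonneg c)
      have h6 : ‖c‖ * ‖x - u₀‖ ≤ B' / B * ‖u + c • x‖ := by
        have hd' : ‖x - u₀‖ ≤ B' / B * d := by
          have := hu₀; rw [dist_eq_norm] at this; linarith
        calc ‖c‖ * ‖x - u₀‖ ≤ ‖c‖ * (B' / B * d) :=
              mul_le_mul_of_nonneg_left hd' (norm_nonneg _)
          _ = B' / B * (‖c‖ * d) := by ring
          _ ≤ B' / B * ‖u + c • x‖ :=
              mul_le_mul_of_nonneg_left h5 (by positivity)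
      have h7 : ‖u + c • u₀‖ ≤ B' / B * ‖u + c • x‖ := by
        refine h3.trans ?_
        rw [h4]
        have hA : ‖u + c • x‖ ≤ B' / B * ‖u + c • x‖ := by
          nlinarith [norm_nonneg (u + c • x)]
        exact max_le hA h6
      calc ‖φ ⟨u, hu⟩ + c • y‖ = ‖φ (⟨u, hu⟩ + c • ⟨u₀, hu₀mem⟩)‖ := by rw [hval]
        _ ≤ B * ‖u + c • u₀‖ := h1
        _ ≤ B * (B' / B * ‖u + c • x‖) := mul_le_mul_of_nonneg_left h7 hB0.le
        _ = B' * ‖u + c • x‖ := by field_simp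
    refine ⟨ψ, ⟨?_, ?_, ?_⟩, hle, ?_⟩
    · exact hNle.trans hle.1
    · rintro ⟨z, hz⟩
      rw [hdom] at hz
      obtain ⟨u, hu, w, hw, rfl⟩ := Submodule.mem_sup.1 hz
      obtain ⟨c, rfl⟩ := Submodule.mem_span_singleton.1 hw
      have happ : ψ ⟨u + c • x, by rw [hdom]; exact hz⟩ = φ ⟨u, hu⟩ + c • y :=
        LinearPMap.supSpanSingleton_apply_mk φ x y hx u hu c
      calc ‖ψ ⟨u + c • x, _⟩‖ = ‖φ ⟨u, hu⟩ + c • y‖ := by rw [happ]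
        _ ≤ B' * ‖u + c • x‖ := key u hu c
    · intro v hv h
      have h1 : φ ⟨v, hNle hv⟩ = ψ ⟨v, h⟩ := hle.2 rfl
      rw [← h1]
      exact hproj v hv (hNle hv)
    · rw [hdom]
      exact Submodule.mem_sup_right (Submodule.mem_span_singleton_self x)

lemma step_closure {N : Submodule K V} {B : ℝ} [CompleteSpace V]
    (hN : IsClosed (N : Set V)) (φ : V →ₗ.[K] ↥N) (hgood : GoodExt N B φ) :
    ∃ ψ, GoodExt N B ψ ∧ φ ≤ ψ ∧ ψ.domain = φ.domain.topologicalClosure := by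
  haveI : CompleteSpace ↥N := hN.completeSpace_coe
  obtain ⟨hNle, hbound, hproj⟩ := hgood
  set D := φ.domain with hD_def
  set Dc := D.topologicalClosure with hDc_def
  have hDleDc : D ≤ Dc := Submodule.le_topologicalClosure D
  set φc : ↥D →L[K] ↥N := LinearMap.mkContinuous φ.toFun B (fun z => hbound z) with hφc_def
  have hφc_apply : ∀ z : ↥D, φc z = φ z := fun z => rfl
  set e : ↥D →L[K] ↥Dc :=
    LinearMap.mkContinuous (Submodule.inclusion hDleDc) 1
      (fun z => by rw [one_mul]; exact le_of_eq rfl) with he_def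
  have he_coe : ∀ z : ↥D, ((e z : ↥Dc) : V) = (z : V) := fun z => rfl
  have he_isom : Isometry e := Isometry.of_dist_eq fun a b => rfl
  have hdense : DenseRange e := by
    intro z
    have hz : (z : V) ∈ closure (D : Set V) := by
      rw [← Submodule.topologicalClosure_coe]
      exact z.2
    obtain ⟨w, hwD, hwlim⟩ := mem_closure_iff_seq_limit.1 hz
    have hlim : Tendsto (fun n => e ⟨w n, hwD n⟩) atTop (𝓝 z) := by
      rw [tendsto_subtype_rng]
      exact hwlim
    exact mem_closure_of_tendsto hlim (Eventually.of_forall fun n => ⟨⟨w n, hwD n⟩, rfl⟩)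
  set ψc : ↥Dc →L[K] ↥N := φc.extend e with hψc_def
  have hψc_eq : ∀ z : ↥D, ψc (e z) = φc z := fun z =>
    ContinuousLinearMap.extend_eq φc hdense he_isom.isUniformInducing z
  have hbound' : ∀ z : ↥Dc, ‖ψc z‖ ≤ B * ‖z‖ := by
    intro z
    refine DenseRange.induction_on hdense z ?_ ?_
    · exact isClosed_le (continuous_norm.comp ψc.continuous)
        (continuous_const.mul continuous_norm)
    · intro a
      rw [hψc_eq a]
      calc ‖φc a‖ ≤ B * ‖(a : V)‖ := hbound a
        _ = B * ‖e a‖ := by rw [he_isom.norm_map_of_map_zero (map_zero e) a]; rfl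
  refine ⟨⟨Dc, (ψc : ↥Dc →ₗ[K] ↥N)⟩, ⟨?_, ?_, ?_⟩, ?_, rfl⟩
  · exact hNle.trans hDleDc
  · intro z
    exact hbound' z
  · intro v hv h
    have h1 : φ ⟨v, hNle hv⟩ = ψc ⟨v, h⟩ := by
      have : e ⟨v, hNle hv⟩ = ⟨v, h⟩ := Subtype.ext rfl
      rw [← this, hψc_eq]
      rfl
    rw [show ((⟨Dc, (ψc : ↥Dc →ₗ[K] ↥N)⟩ : V →ₗ.[K] ↥N) ⟨v, h⟩) = ψc ⟨v, h⟩ from rfl, ← h1]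
    exact hproj v hv (hNle hv)
  · refine ⟨hDleDc, ?_⟩
    rintro ⟨a, ha⟩ ⟨b, hb⟩ hab
    simp only [] at hab
    subst hab
    have : e ⟨a, ha⟩ = ⟨a, hb⟩ := Subtype.ext rfl
    rw [show ((⟨Dc, (ψc : ↥Dc →ₗ[K] ↥N)⟩ : V →ₗ.[K] ↥N) ⟨a, hb⟩) = ψc ⟨a, hb⟩ from rfl,
      ← this, hψc_eq]
    rfl

theorem exists_projection [CompleteSpace V]
    (hsep : ∃ s : Set V, s.Countable ∧ Dense ((Submodule.span K s : Submodule K V) : Set V))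
    (N : Submodule K V) (hN : IsClosed (N : Set V)) :
    ∃ Φ : V →L[K] ↥N, ∀ n : ↥N, Φ ↑n = n := by
  haveI : CompleteSpace ↥N := hN.completeSpace_coe
  obtain ⟨s, hsc, hsd⟩ := hsep
  obtain ⟨x, hx⟩ : ∃ x : ℕ → V, s ⊆ Set.range x := by
    rcases Set.eq_empty_or_nonempty s with rfl | hne
    · exact ⟨fun _ => 0, by simp⟩
    · obtain ⟨f, hf⟩ := hsc.exists_eq_range hne
      exact ⟨f, hf ▸ subset_rfl⟩
  set B : ℕ → ℝ := fun i => 2 - (2⁻¹ : ℝ) ^ i with hB_def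
  have hB1 : ∀ i, 1 ≤ B i := by
    intro i
    have : (2⁻¹:ℝ)^i ≤ 1 := pow_le_one₀ (by norm_num) (by norm_num)
    simp only [hB_def]
    linarith
  have hB2 : ∀ i, B i ≤ 2 := by
    intro i
    have : (0:ℝ) < (2⁻¹:ℝ)^i := by positivity
    simp only [hB_def]
    linarith
  have hBlt : ∀ i, B i < B (i+1) := by
    intro i
    have h1 : (0:ℝ) < (2⁻¹:ℝ)^i := by positivity
    simp only [hB_def, pow_succ]
    nlinarith
  have hstep : ∀ (i : ℕ) (φ : V →ₗ.[K] ↥N), GoodExt N (B i) φ →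
      IsClosed (φ.domain : Set V) →
      ∃ ψ, (GoodExt N (B (i+1)) ψ ∧ IsClosed (ψ.domain : Set V)) ∧ φ ≤ ψ ∧
        x i ∈ ψ.domain := by
    intro i φ hg hc
    obtain ⟨ψ₁, hg₁, hle₁, hxmem⟩ := step_alg (hB1 i) (hBlt i) φ hg hc (x i)
    obtain ⟨ψ₂, hg₂, hle₂, hdom₂⟩ := step_closure hN ψ₁ hg₁
    refine ⟨ψ₂, ⟨hg₂, ?_⟩, hle₁.trans hle₂, hle₂.1 hxmem⟩
    rw [hdom₂]
    exact Submodule.isClosed_topologicalClosure _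
  choose next hnext using hstep
  set φ₀ : V →ₗ.[K] ↥N := ⟨N, LinearMap.id⟩ with hφ₀
  have hg₀ : GoodExt N (B 0) φ₀ ∧ IsClosed ((φ₀.domain : Submodule K V) : Set V) := by
    refine ⟨⟨le_refl _, ?_, ?_⟩, hN⟩
    · intro z
      have hB0 : B 0 = 1 := by norm_num [hB_def]
      rw [hB0, one_mul]
      exact le_of_eq rfl
    · intro v hv h
      rfl
  let chain : ∀ i : ℕ, {φ : V →ₗ.[K] ↥N //
      GoodExt N (B i) φ ∧ IsClosed ((φ.domain : Submodule K V) : Set V)} :=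
    fun i => Nat.rec ⟨φ₀, hg₀⟩ (fun j prev => ⟨next j prev.1 prev.2.1 prev.2.2,
      (hnext j prev.1 prev.2.1 prev.2.2).1⟩) i
  have chain_succ : ∀ i, (chain i).1 ≤ (chain (i+1)).1 ∧ x i ∈ (chain (i+1)).1.domain :=
    fun i => (hnext i (chain i).1 (chain i).2.1 (chain i).2.2).2
  have chain_mono : ∀ i j, i ≤ j → (chain i).1 ≤ (chain j).1 := by
    intro i j hij
    induction hij with
    | refl => exact le_refl _
    | step h ih => exact ih.trans (chain_succ _).1
  set c : Set (V →ₗ.[K] ↥N) := Set.range (fun i => (chain i).1) with hc_def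
  have hdir : DirectedOn (· ≤ ·) c := by
    rintro _ ⟨i, rfl⟩ _ ⟨j, rfl⟩
    exact ⟨(chain (max i j)).1, ⟨max i j, rfl⟩, chain_mono _ _ (le_max_left _ _),
      chain_mono _ _ (le_max_right _ _)⟩
  set Φp := LinearPMap.sSup c hdir with hΦp
  have hle_sup : ∀ i, (chain i).1 ≤ Φp := fun i => LinearPMap.le_sSup hdir ⟨i, rfl⟩
  have hdom_mem : ∀ v : V, v ∈ Φp.domain → ∃ i, v ∈ (chain i).1.domain := by
    intro v hv
    have hveq : v ∈ sSup (LinearPMap.domain '' c) := hv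
    have himg : (LinearPMap.domain '' c).Nonempty :=
      ⟨(chain 0).1.domain, ⟨(chain 0).1, ⟨0, rfl⟩, rfl⟩⟩
    have hdir' : DirectedOn (· ≤ ·) (LinearPMap.domain '' c) :=
      directedOn_image.2 (hdir.mono @(LinearPMap.domain_mono.monotone))
    obtain ⟨p, hp, hvp⟩ := (Submodule.mem_sSup_of_directed himg hdir').1 hveq
    obtain ⟨g, hg, rfl⟩ := hp
    obtain ⟨i, rfl⟩ := hg
    exact ⟨i, hvp⟩
  have hΦbound : ∀ z : Φp.domain, ‖Φp z‖ ≤ 2 * ‖(z : V)‖ := by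
    intro z
    obtain ⟨i, hi⟩ := hdom_mem z z.2
    have hagree : (chain i).1 ⟨z, hi⟩ = Φp z := (hle_sup i).2 rfl
    rw [← hagree]
    exact le_trans ((chain i).2.1.2.1 ⟨z, hi⟩)
      (mul_le_mul_of_nonneg_right (hB2 i) (norm_nonneg _))
  have hNleΦ : N ≤ Φp.domain := le_trans (le_refl N) (hle_sup 0).1
  have hΦproj : ∀ (v) (hv : v ∈ N) (h : v ∈ Φp.domain), ((Φp ⟨v, h⟩ : ↥N) : V) = v := by
    intro v hv h
    have hagree : φ₀ ⟨v, hv⟩ = Φp ⟨v, h⟩ := (hle_sup 0).2 rfl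
    rw [← hagree]
    rfl
  have hdense : Dense (Φp.domain : Set V) := by
    have hsub : ((Submodule.span K s : Submodule K V) : Set V) ⊆ (Φp.domain : Set V) := by
      have hss : s ⊆ (Φp.domain : Set V) := by
        intro a ha
        obtain ⟨i, rfl⟩ := hx ha
        exact ((hle_sup (i+1)).1 (chain_succ i).2 : x i ∈ Φp.domain)
      exact (Submodule.span_le.2 hss : Submodule.span K s ≤ Φp.domain)
    exact hsd.mono hsub
  set Φ₁ : ↥Φp.domain →L[K] ↥N := LinearMap.mkContinuous Φp.toFun 2 hΦbound with hΦ₁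
  set e : ↥Φp.domain →L[K] V := Φp.domain.subtypeL with he
  have he_coe : ⇑e = (Subtype.val : ↥Φp.domain → V) := rfl
  have he_dense : DenseRange e := by
    rw [he_coe]
    exact hdense.denseRange_val
  have he_ui : IsUniformInducing e := by
    rw [show ⇑e = (Subtype.val : ↥Φp.domain → V) from rfl] at *
    exact isUniformEmbedding_subtype_val.isUniformInducing
  refine ⟨Φ₁.extend e, ?_⟩
  intro n
  have hmem : (n : V) ∈ Φp.domain := hNleΦ n.2
  have h2 : Φ₁.extend e (e ⟨(n : V), hmem⟩) = Φ₁ ⟨(n : V), hmem⟩ :=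
    ContinuousLinearMap.extend_eq Φ₁ he_dense he_ui _
  have h1 : e ⟨(n : V), hmem⟩ = (n : V) := rfl
  rw [h1] at h2
  rw [h2]
  exact Subtype.ext (hΦproj (n : V) n.2 hmem)

end ToolT

end AuxLemmas


/-- A Banach space over a nonarchimedean field is *separable* if it contains a dense
`K`-subspace of at most countable dimension, i.e. the span of a countable set is
dense. -/
def CountablyGenerated (K V : Type*) [NontriviallyNormedField K]
    [NormedAddCommGroup V] [NormedSpace K V] : Prop :=
  ∃ s : Set V, s.Countable ∧ Dense (Submodule.span K s : Set V)

/-- If `f : V → V'` is a continuous linear map of separable Banach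
spaces over a nonarchimedean field with finite-dimensional kernel and cokernel, then
there is a continuous linear `g : V' → V` such that both `f ∘ g - id` and
`g ∘ f - id` have finite rank. -/
theorem exists_approximate_inverse
    {K : Type*} [NontriviallyNormedField K] [IsUltrametricDist K]
    {V V' : Type*} [NormedAddCommGroup V] [NormedSpace K V] [CompleteSpace V]
    [IsUltrametricDist V]
    [NormedAddCommGroup V'] [NormedSpace K V'] [CompleteSpace V'] [IsUltrametricDist V']
    (hsepV : CountablyGenerated K V) (hsepV' : CountablyGenerated K V')
    (f : V →L[K] V')
    (hker : FiniteDimensional K ↥(LinearMap.ker (f : V →ₗ[K] V')))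
    (hcoker : FiniteDimensional K (V' ⧸ LinearMap.range (f : V →ₗ[K] V'))) :
    ∃ g : V' →L[K] V,
      FiniteDimensional K
        ↥(LinearMap.range ((f.comp g - ContinuousLinearMap.id K V') : V' →ₗ[K] V')) ∧
      FiniteDimensional K
        ↥(LinearMap.range ((g.comp f - ContinuousLinearMap.id K V) : V →ₗ[K] V)) := by
  classical
  haveI := hker
  haveI := hcoker
  set κ : Submodule K V := LinearMap.ker (f : V →ₗ[K] V') with hκdef
  set N : Submodule K V' := LinearMap.range (f : V →ₗ[K] V') with hNdef
  have hκclosed : IsClosed (κ : Set V) := by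
    have hset : (κ : Set V) = ⇑f ⁻¹' {0} := by
      ext v
      simp [hκdef, LinearMap.mem_ker]
    rw [hset]
    exact isClosed_singleton.preimage f.continuous
  have hNclosed : IsClosed (N : Set V') := isClosed_range_of_fd_coker f hcoker
  obtain ⟨Φ, hΦ⟩ := exists_projection hsepV κ hκclosed
  obtain ⟨Q, hQ⟩ := exists_projection hsepV' N hNclosed
  set W : Submodule K V := LinearMap.ker (Φ : V →ₗ[K] ↥κ) with hWdef
  have hWclosed : IsClosed (W : Set V) := by
    have hset : (W : Set V) = ⇑Φ ⁻¹' {0} := by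
      ext v
      simp [hWdef, LinearMap.mem_ker]
    rw [hset]
    exact isClosed_singleton.preimage Φ.continuous
  haveI : CompleteSpace ↥W := hWclosed.completeSpace_coe
  haveI : CompleteSpace ↥N := hNclosed.completeSpace_coe
  have hmemN : ∀ w : ↥W, (f.comp W.subtypeL) w ∈ N := fun w =>
    LinearMap.mem_range_self _ (w : V)
  set h : ↥W →L[K] ↥N := (f.comp W.subtypeL).codRestrict N hmemN with hhdef
  have hcoe : ∀ w : ↥W, ((h w : ↥N) : V') = f (w : V) := fun w => rfl
  have hfκ : ∀ z : V, z ∈ κ → f z = 0 := by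
    intro z hz
    exact hz
  have hinj : LinearMap.ker (h : ↥W →ₗ[K] ↥N) = ⊥ := by
    rw [Submodule.eq_bot_iff]
    rintro w hw
    have h1 : f (w : V) = 0 := by
      rw [← hcoe w]
      rw [show h w = 0 from (LinearMap.mem_ker).1 hw]
      rfl
    have hwκ : (w : V) ∈ κ := h1
    have h2 : Φ (w : V) = ⟨(w : V), hwκ⟩ := hΦ ⟨(w : V), hwκ⟩
    have h3 : Φ (w : V) = 0 := (LinearMap.mem_ker).1 w.2
    have h4 : ((w : V) : V) = 0 := by
      have := h2.symm.trans h3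
      exact congrArg Subtype.val this
    exact Subtype.ext h4
  have hWval : ∀ v : V, v - (Φ v : V) ∈ W := by
    intro v
    have h2 : Φ ((Φ v : V)) = Φ v := hΦ (Φ v)
    have h3 : Φ (v - (Φ v : V)) = 0 := by
      rw [map_sub, h2, sub_self]
    exact LinearMap.mem_ker.2 h3
  have hsurj : LinearMap.range (h : ↥W →ₗ[K] ↥N) = ⊤ := by
    rw [LinearMap.range_eq_top]
    rintro ⟨y, hy⟩
    obtain ⟨v, hv⟩ := hy
    refine ⟨⟨v - (Φ v : V), hWval v⟩, ?_⟩
    apply Subtype.ext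
    show f (v - (Φ v : V)) = y
    rw [map_sub, hfκ _ (Φ v).2, sub_zero]
    exact hv
  set E := ContinuousLinearEquiv.ofBijective h hinj hsurj with hEdef
  have hEapp : ∀ w : ↥W, E w = h w := fun w => by
    rw [hEdef, ContinuousLinearEquiv.coeFn_ofBijective]
  set g : V' →L[K] V := W.subtypeL.comp ((E.symm : ↥N →L[K] ↥W).comp Q) with hgdef
  have hgval : ∀ y : V', g y = ((E.symm (Q y) : ↥W) : V) := fun y => rfl
  have hgf : ∀ v : V, g (f v) = v - (Φ v : V) := by
    intro v
    have hfvN : f v ∈ N := LinearMap.mem_range_self _ v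
    have h1 : Q (f v) = ⟨f v, hfvN⟩ := hQ ⟨f v, hfvN⟩
    have h2 : E ⟨v - (Φ v : V), hWval v⟩ = ⟨f v, hfvN⟩ := by
      rw [hEapp]
      apply Subtype.ext
      show f (v - (Φ v : V)) = f v
      rw [map_sub, hfκ _ (Φ v).2, sub_zero]
    have h3 : E.symm ⟨f v, hfvN⟩ = ⟨v - (Φ v : V), hWval v⟩ := by
      rw [← h2, ContinuousLinearEquiv.symm_apply_apply]
    rw [hgval, h1, h3]
  have hfg : ∀ y : V', f (g y) = ((Q y : ↥N) : V') := by
    intro y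
    have h1 : E (E.symm (Q y)) = Q y := E.apply_symm_apply (Q y)
    have h2 : ((E (E.symm (Q y)) : ↥N) : V') = f ((E.symm (Q y) : ↥W) : V) := by
      rw [hEapp]
      rfl
    rw [hgval, ← h2, h1]
  refine ⟨g, ?_, ?_⟩
  · have hrange : LinearMap.range ((f.comp g - ContinuousLinearMap.id K V') : V' →ₗ[K] V')
        ≤ LinearMap.ker (Q : V' →ₗ[K] ↥N) := by
      rintro z ⟨y, rfl⟩
      rw [LinearMap.mem_ker]
      show Q (f (g y) - y) = 0
      rw [hfg, map_sub]
      have hq2 : Q ((Q y : ↥N) : V') = Q y := hQ (Q y)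
      rw [hq2, sub_self]
    haveI hkerQfd : FiniteDimensional K ↥(LinearMap.ker (Q : V' →ₗ[K] ↥N)) := by
      set ψ : ↥(LinearMap.ker (Q : V' →ₗ[K] ↥N)) →ₗ[K] V' ⧸ N :=
        N.mkQ.comp (LinearMap.ker (Q : V' →ₗ[K] ↥N)).subtype with hψdef
      have hψinj : Function.Injective ψ := by
        rw [← LinearMap.ker_eq_bot, Submodule.eq_bot_iff]
        rintro z hz
        have h1 : Submodule.Quotient.mk (z : V') = (0 : V' ⧸ N) := hz
        have h2 : (z : V') ∈ N := (Submodule.Quotient.mk_eq_zero N).1 h1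
        have h3 : Q (z : V') = ⟨(z : V'), h2⟩ := hQ ⟨(z : V'), h2⟩
        have h4 : Q (z : V') = 0 := LinearMap.mem_ker.1 z.2
        have h5 : ((z : V') : V') = 0 := congrArg Subtype.val (h3.symm.trans h4)
        exact Subtype.ext h5
      exact FiniteDimensional.of_injective ψ hψinj
    exact Submodule.finiteDimensional_of_le hrange
  · have hrange : LinearMap.range ((g.comp f - ContinuousLinearMap.id K V) : V →ₗ[K] V)
        ≤ κ := by
      rintro z ⟨v, rfl⟩
      show g (f v) - v ∈ κ
      rw [hgf]
      have heq : v - (Φ v : V) - v = -(Φ v : V) := by abel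
      rw [heq]
      exact Submodule.neg_mem _ (Φ v).2
    exact Submodule.finiteDimensional_of_le hrange
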